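/- For any T, λ > 0, θ ∈ [0,1], and γ > 0, there is a constant C = C(T,γ,θ,λ) such that for all 0 ≤ s < t ≤ T and ζ = (ξ,η) ∈ R^{2d}: ∫_s^t r^{γ−1} e^{−λ(r³|ξ|² + r|η|²)} dr ≤ C |t−s|^{(γ∧1)(1−θ)} (1 + |ζ|_a)^{−2θγ}, where |ζ|_a = |ξ|^{1/3} + |η|. -/

import Mathlib

open MeasureTheory

open Set Real

-- subadditivity of rpow for p ≤ 1
lemma my_add_rpow_le {x y p : ℝ} (hx : 0 ≤ x) (hy : 0 ≤ y) (hp : 0 ≤ p) (hp1 : p ≤ 1) :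
    (x + y) ^ p ≤ x ^ p + y ^ p := by
  lift x to NNReal using hx
  lift y to NNReal using hy
  have := NNReal.rpow_add_le_add_rpow x y hp hp1
  exact_mod_cast this

-- interpolation
lemma my_interp {I A B θ : ℝ} (hI : 0 ≤ I) (hA : I ≤ A) (hB : I ≤ B)
    (hθ0 : 0 ≤ θ) (hθ1 : θ ≤ 1) : I ≤ A ^ (1 - θ) * B ^ θ := by
  have hA0 : 0 ≤ A := hI.trans hA
  calc I = I ^ ((1 - θ) + θ) := by norm_num
    _ = I ^ (1 - θ) * I ^ θ := Real.rpow_add' hI (by norm_num)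
    _ ≤ A ^ (1 - θ) * B ^ θ :=
      mul_le_mul (Real.rpow_le_rpow hI hA (by linarith)) (Real.rpow_le_rpow hI hB hθ0)
        (Real.rpow_nonneg hI θ) (Real.rpow_nonneg hA0 _)

-- substitution
lemma my_subst (γ lam b : ℝ) (hb : 0 < b) (n : ℕ) :
    ∫ x in Ioi (0:ℝ), x ^ (γ - 1) * Real.exp (-lam * (b ^ n * x ^ n)) =
      b ^ (-γ) * ∫ u in Ioi (0:ℝ), u ^ (γ - 1) * Real.exp (-lam * u ^ n) := by
  have h := integral_comp_mul_left_Ioi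
    (fun u => u ^ (γ - 1) * Real.exp (-lam * u ^ n)) 0 hb
  rw [mul_zero] at h
  have h2 : ∫ x in Ioi (0:ℝ), (fun u => u ^ (γ - 1) * Real.exp (-lam * u ^ n)) (b * x)
      = b ^ (γ - 1) * ∫ x in Ioi (0:ℝ), x ^ (γ - 1) * Real.exp (-lam * (b ^ n * x ^ n)) := by
    rw [← integral_const_mul]
    apply setIntegral_congr_fun measurableSet_Ioi
    intro x hx
    simp only
    rw [Real.mul_rpow hb.le (le_of_lt hx), mul_pow]
    ring
  rw [h2] at h
  have hbne : b ^ (γ - 1) ≠ 0 := (Real.rpow_pos_of_pos hb _).ne'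
  field_simp at h
  simp only [neg_mul] at h ⊢
  have hbg : b ^ (γ - 1) * b = b ^ γ := by
    nth_rewrite 2 [← Real.rpow_one b]
    rw [← Real.rpow_add hb]
    norm_num
  have hbγ : (0:ℝ) < b ^ γ := Real.rpow_pos_of_pos hb _
  rw [Real.rpow_neg hb.le, ← hbg]
  rw [smul_eq_mul, one_div] at h
  simp only [mul_assoc] at h
  rw [mul_inv, mul_assoc, ← h, ← mul_assoc, inv_mul_cancel₀ hbne, one_mul]

lemma my_timebound (T γ : ℝ) (hT : 0 < T) (hγ : 0 < γ) :
    ∀ s t : ℝ, 0 ≤ s → s < t → t ≤ T →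
      ∫ r in Ioc s t, r ^ (γ - 1) ≤ (T ^ (γ - 1) + 1/γ + 1) * (t - s) ^ (min γ 1) := by
  intro s t hs hst htT
  have hCpos : (0:ℝ) < T ^ (γ - 1) + 1/γ + 1 := by positivity
  have hint : IntegrableOn (fun r : ℝ => r ^ (γ - 1)) (Ioc s t) := by
    have h := intervalIntegral.intervalIntegrable_rpow' (a := s) (b := t)
      (by linarith : (-1:ℝ) < γ - 1)
    rwa [intervalIntegrable_iff_integrableOn_Ioc_of_le hst.le] at h
  rcases le_or_gt γ 1 with hγ1 | hγ1
  · have hmin : min γ 1 = γ := min_eq_left hγ1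
    have hcalc : ∫ r in Ioc s t, r ^ (γ - 1) = (t ^ γ - s ^ γ) / γ := by
      rw [← intervalIntegral.integral_of_le hst.le,
        integral_rpow (Or.inl (by linarith : (-1:ℝ) < γ - 1))]
      norm_num
    have hsub : t ^ γ ≤ s ^ γ + (t - s) ^ γ := by
      have h2 := my_add_rpow_le (x := s) (y := t - s) hs (by linarith) hγ.le hγ1
      have h3 : s + (t - s) = t := by ring
      rwa [h3] at h2
    rw [hcalc, hmin]
    have hts : (0:ℝ) ≤ (t - s) ^ γ := Real.rpow_nonneg (by linarith) _
    have h1 : (t ^ γ - s ^ γ) / γ ≤ (t - s) ^ γ / γ := by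
      gcongr <;> linarith
    have hTp : (0:ℝ) < T ^ (γ - 1) := Real.rpow_pos_of_pos hT _
    have h2 : (t - s) ^ γ / γ = (1/γ) * (t - s) ^ γ := by ring
    have h3 : (1/γ) * (t - s) ^ γ ≤ (T ^ (γ - 1) + 1/γ + 1) * (t - s) ^ γ :=
      mul_le_mul_of_nonneg_right (by linarith) hts
    linarith
  · have hmin : min γ 1 = 1 := min_eq_right hγ1.le
    have hconst : IntegrableOn (fun _ : ℝ => T ^ (γ - 1)) (Ioc s t) :=
      integrableOn_const measure_Ioc_lt_top.ne
    have hb : ∫ r in Ioc s t, r ^ (γ - 1) ≤ ∫ _ in Ioc s t, T ^ (γ - 1) := by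
      apply setIntegral_mono_on hint hconst measurableSet_Ioc
      intro r hr
      exact Real.rpow_le_rpow (le_trans hs hr.1.le) (hr.2.trans htT) (by linarith)
    have hc : ∫ _ in Ioc s t, T ^ (γ - 1) = (t - s) * T ^ (γ - 1) := by
      rw [setIntegral_const, smul_eq_mul, Real.volume_real_Ioc_of_le hst.le]
    rw [hmin, Real.rpow_one]
    rw [hc] at hb
    have : (t - s) * T ^ (γ - 1) ≤ (T ^ (γ - 1) + 1/γ + 1) * (t - s) := by
      rw [mul_comm]
      apply mul_le_mul_of_nonneg_right
        (by linarith [(by positivity : (0:ℝ) < 1/γ)]) (by linarith)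
    linarith

-- measurability of the integrand
lemma my_meas (γ lam A B : ℝ) :
    Measurable (fun r : ℝ => r ^ (γ - 1) * Real.exp (-lam * (r ^ 3 * A + r * B))) := by
  fun_prop

-- integrability of r^{γ-1} on Ioc
lemma my_rpow_int (γ : ℝ) (hγ : 0 < γ) {s t : ℝ} (hst : s ≤ t) :
    IntegrableOn (fun r : ℝ => r ^ (γ - 1)) (Ioc s t) := by
  have h := intervalIntegral.intervalIntegrable_rpow' (a := s) (b := t)
    (by linarith : (-1:ℝ) < γ - 1)
  rwa [intervalIntegrable_iff_integrableOn_Ioc_of_le hst] at h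

-- pointwise: on Ioc s t with 0 ≤ s the integrand is ≤ r^{γ-1} and nonneg
lemma my_ptwise (γ lam A B : ℝ) (hlam : 0 < lam) (hA : 0 ≤ A) (hB : 0 ≤ B)
    {s t r : ℝ} (hs : 0 ≤ s) (hr : r ∈ Ioc s t) :
    0 ≤ r ^ (γ - 1) * Real.exp (-lam * (r ^ 3 * A + r * B)) ∧
    r ^ (γ - 1) * Real.exp (-lam * (r ^ 3 * A + r * B)) ≤ r ^ (γ - 1) := by
  have hr0 : 0 ≤ r := le_trans hs hr.1.le
  have hrp : 0 ≤ r ^ (γ - 1) := Real.rpow_nonneg hr0 _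
  have harg : 0 ≤ r ^ 3 * A + r * B :=
    add_nonneg (mul_nonneg (pow_nonneg hr0 3) hA) (mul_nonneg hr0 hB)
  constructor
  · exact mul_nonneg hrp (Real.exp_nonneg _)
  · apply mul_le_of_le_one_right hrp
    rw [Real.exp_le_one_iff]
    nlinarith

lemma my_fint (γ lam A B : ℝ) (hγ : 0 < γ) (hlam : 0 < lam) (hA : 0 ≤ A) (hB : 0 ≤ B)
    {s t : ℝ} (hs : 0 ≤ s) (hst : s ≤ t) :
    IntegrableOn (fun r : ℝ => r ^ (γ - 1) * Real.exp (-lam * (r ^ 3 * A + r * B)))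
      (Ioc s t) := by
  apply Integrable.mono' (my_rpow_int γ hγ hst)
    (my_meas γ lam A B).aestronglyMeasurable.restrict
  filter_upwards [ae_restrict_mem measurableSet_Ioc] with r hr
  obtain ⟨h0, h1⟩ := my_ptwise γ lam A B hlam hA hB hs hr
  rw [Real.norm_eq_abs, abs_of_nonneg h0]
  exact h1

lemma my_fbound (γ lam A B : ℝ) (hγ : 0 < γ) (hlam : 0 < lam) (hA : 0 ≤ A) (hB : 0 ≤ B)
    {s t : ℝ} (hs : 0 ≤ s) (hst : s ≤ t) :
    (∫ r in Ioc s t, r ^ (γ - 1) * Real.exp (-lam * (r ^ 3 * A + r * B))) ≤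
      ∫ r in Ioc s t, r ^ (γ - 1) := by
  apply setIntegral_mono_on (my_fint γ lam A B hγ hlam hA hB hs hst)
    (my_rpow_int γ hγ hst) measurableSet_Ioc
  intro r hr
  exact (my_ptwise γ lam A B hlam hA hB hs hr).2

lemma my_decay_one (γ lam : ℝ) (hγ : 0 < γ) (hlam : 0 < lam) (c : ℝ) (hc : 0 < c)
    (n : ℕ) (hn : 1 ≤ (n : ℝ)) (A B : ℝ) (hA : 0 ≤ A) (hB : 0 ≤ B)
    {s t : ℝ} (hs : 0 ≤ s) (hst : s ≤ t)
    (hpt : ∀ r : ℝ, 0 < r → c ^ n * r ^ n ≤ r ^ 3 * A + r * B) :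
    (∫ r in Ioc s t, r ^ (γ - 1) * Real.exp (-lam * (r ^ 3 * A + r * B))) ≤
      c ^ (-γ) * ∫ u in Ioi (0:ℝ), u ^ (γ - 1) * Real.exp (-lam * u ^ n) := by
  set g : ℝ → ℝ := fun x => x ^ (γ - 1) * Real.exp (-lam * (c ^ n * x ^ n)) with hgdef
  have hgIoi : IntegrableOn g (Ioi 0) := by
    have h := integrableOn_rpow_mul_exp_neg_mul_rpow (by linarith : (-1:ℝ) < γ - 1) (lt_of_lt_of_le one_pos hn)
      (show 0 < lam * c ^ n by positivity)
    apply h.congr_fun ?_ measurableSet_Ioi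
    intro x _
    rw [hgdef]
    simp only
    rw [Real.rpow_natCast]
    ring_nf
  have hsub : Ioc s t ⊆ Ioi (0:ℝ) := fun x hx => lt_of_le_of_lt hs hx.1
  have hgIoc : IntegrableOn g (Ioc s t) := hgIoi.mono_set hsub
  have step1 : (∫ r in Ioc s t, r ^ (γ - 1) * Real.exp (-lam * (r ^ 3 * A + r * B))) ≤
      ∫ r in Ioc s t, g r := by
    apply setIntegral_mono_on (my_fint γ lam A B hγ hlam hA hB hs hst) hgIoc measurableSet_Ioc
    intro r hr
    have hr0 : 0 < r := hsub hr
    apply mul_le_mul_of_nonneg_left _ (Real.rpow_nonneg hr0.le _)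
    rw [Real.exp_le_exp]
    have := hpt r hr0
    nlinarith
  have step2 : (∫ r in Ioc s t, g r) ≤ ∫ r in Ioi (0:ℝ), g r := by
    apply setIntegral_mono_set hgIoi _ hsub.eventuallyLE
    filter_upwards [ae_restrict_mem measurableSet_Ioi] with x hx
    exact mul_nonneg (Real.rpow_nonneg (le_of_lt hx) _) (Real.exp_nonneg _)
  have step3 : (∫ r in Ioi (0:ℝ), g r) =
      c ^ (-γ) * ∫ u in Ioi (0:ℝ), u ^ (γ - 1) * Real.exp (-lam * u ^ n) :=
    my_subst γ lam c hc n
  linarith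

lemma my_decay (γ lam T : ℝ) (hγ : 0 < γ) (hlam : 0 < lam) (hT : 0 < T) :
    ∃ C > 0, ∀ s t : ℝ, 0 ≤ s → s < t → t ≤ T → ∀ a b : ℝ, 0 ≤ a → 0 ≤ b →
      (∫ r in Ioc s t, r ^ (γ - 1) * Real.exp (-lam * (r ^ 3 * a ^ 2 + r * b ^ 2))) ≤
        C * (1 + (a ^ ((1:ℝ)/3) + b)) ^ (-(2 * γ)) := by
  set K₃ : ℝ := ∫ u in Ioi (0:ℝ), u ^ (γ - 1) * Real.exp (-lam * u ^ 3) with hK3def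
  set K₁ : ℝ := ∫ u in Ioi (0:ℝ), u ^ (γ - 1) * Real.exp (-lam * u ^ 1) with hK1def
  have hK3 : 0 ≤ K₃ := setIntegral_nonneg measurableSet_Ioi fun x hx =>
    mul_nonneg (Real.rpow_nonneg (le_of_lt hx) _) (Real.exp_nonneg _)
  have hK1 : 0 ≤ K₁ := setIntegral_nonneg measurableSet_Ioi fun x hx =>
    mul_nonneg (Real.rpow_nonneg (le_of_lt hx) _) (Real.exp_nonneg _)
  set S : ℝ := T ^ γ / γ + K₃ + K₁ + 1 with hSdef
  have hTγ : 0 < T ^ γ := Real.rpow_pos_of_pos hT _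
  have hS : 0 < S := by positivity
  refine ⟨(9:ℝ) ^ γ * S, by positivity, ?_⟩
  intro s t hs hst htT a b ha hb
  set M : ℝ := max 1 (max (a ^ ((2:ℝ)/3)) (b ^ 2)) with hMdef
  have hM1 : (1:ℝ) ≤ M := le_max_left _ _
  have hM0 : (0:ℝ) < M := lt_of_lt_of_le one_pos hM1
  have hMγ : (0:ℝ) < M ^ (-γ) := Real.rpow_pos_of_pos hM0 _
  -- step 1 : the integral is at most S * M^{-γ}
  have main : (∫ r in Ioc s t, r ^ (γ - 1) * Real.exp (-lam * (r ^ 3 * a ^ 2 + r * b ^ 2))) ≤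
      S * M ^ (-γ) := by
    rcases le_total (max (a ^ ((2:ℝ)/3)) (b ^ 2)) 1 with hle | hge
    · -- M = 1
      have hMeq : M = 1 := max_eq_left hle
      have h1 : (∫ r in Ioc s t, r ^ (γ - 1) * Real.exp (-lam * (r ^ 3 * a ^ 2 + r * b ^ 2))) ≤
          ∫ r in Ioc s t, r ^ (γ - 1) :=
        my_fbound γ lam (a ^ 2) (b ^ 2) hγ hlam (sq_nonneg a) (sq_nonneg b) hs hst.le
      have h2 : (∫ r in Ioc s t, r ^ (γ - 1)) ≤ ∫ r in Ioc 0 T, r ^ (γ - 1) := by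
        apply setIntegral_mono_set (my_rpow_int γ hγ hT.le) _
          (HasSubset.Subset.eventuallyLE (Ioc_subset_Ioc hs htT))
        filter_upwards [ae_restrict_mem measurableSet_Ioc] with x hx
        exact Real.rpow_nonneg hx.1.le _
      have h3 : (∫ r in Ioc 0 T, r ^ (γ - 1)) = T ^ γ / γ := by
        rw [← intervalIntegral.integral_of_le hT.le,
          integral_rpow (Or.inl (by linarith : (-1:ℝ) < γ - 1))]
        rw [Real.zero_rpow (by linarith : γ - 1 + 1 ≠ 0)]
        norm_num
      rw [hMeq, Real.one_rpow, mul_one]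
      have h4 : T ^ γ / γ ≤ S := by
        have h5 : 0 ≤ K₃ + K₁ + 1 := by linarith
        rw [hSdef]; linarith
      exact h1.trans (h2.trans (h3.le.trans h4))
    · -- M = max (a^{2/3}) (b²)
      have hMeq : M = max (a ^ ((2:ℝ)/3)) (b ^ 2) := max_eq_right hge
      rcases le_total (b ^ 2) (a ^ ((2:ℝ)/3)) with hba | hab
      · -- M = a^{2/3}
        have hMa : M = a ^ ((2:ℝ)/3) := by rw [hMeq, max_eq_left hba]
        have ha0 : 0 < a := by
          rcases ha.lt_or_eq with h | h
          · exact h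
          · exfalso
            rw [← h, Real.zero_rpow (by norm_num : (2:ℝ)/3 ≠ 0)] at hMa
            linarith [hM1, hMa]
        have hc : 0 < a ^ ((2:ℝ)/3) := Real.rpow_pos_of_pos ha0 _
        have hcube : (a ^ ((2:ℝ)/3)) ^ (3:ℕ) = a ^ 2 := by
          rw [← Real.rpow_natCast (a ^ ((2:ℝ)/3)) 3, ← Real.rpow_mul ha,
            ← Real.rpow_natCast a 2]
          norm_num
        have h := my_decay_one γ lam hγ hlam (a ^ ((2:ℝ)/3)) hc 3 (by norm_num)
          (a ^ 2) (b ^ 2) (sq_nonneg a) (sq_nonneg b) hs hst.le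
          (fun r hr => by rw [hcube]; nlinarith [mul_nonneg hr.le (sq_nonneg b)])
        rw [← hK3def, ← hMa] at h
        have h6 : M ^ (-γ) * K₃ ≤ S * M ^ (-γ) := by
          rw [mul_comm]
          apply mul_le_mul_of_nonneg_right _ hMγ.le
          have h5 : 0 < T ^ γ / γ := by positivity
          rw [hSdef]; linarith
        exact h.trans h6
      · -- M = b²
        have hMb : M = b ^ 2 := by rw [hMeq, max_eq_right hab]
        have hb0 : 0 < b := by
          rcases hb.lt_or_eq with h | h
          · exact h
          · exfalso
            rw [← h] at hMb
            simp at hMb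
            linarith [hM1, hMb]
        have hc : 0 < b ^ 2 := by positivity
        have h := my_decay_one γ lam hγ hlam (b ^ 2) hc 1 (by norm_num)
          (a ^ 2) (b ^ 2) (sq_nonneg a) (sq_nonneg b) hs hst.le
          (fun r hr => by
            simp only [pow_one]
            nlinarith [mul_nonneg (pow_nonneg hr.le 3) (sq_nonneg a)])
        rw [← hK1def] at h
        rw [hMb]
        have h6 : (b ^ 2) ^ (-γ) * K₁ ≤ S * (b ^ 2) ^ (-γ) := by
          have hMγ' : (0:ℝ) < (b ^ 2) ^ (-γ) := Real.rpow_pos_of_pos hc _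
          rw [mul_comm]
          apply mul_le_mul_of_nonneg_right _ hMγ'.le
          have h5 : 0 < T ^ γ / γ := by positivity
          rw [hSdef]; linarith
        exact h.trans h6
  -- step 2 : S * M^{-γ} ≤ 9^γ * S * N^{-2γ}
  set N : ℝ := 1 + (a ^ ((1:ℝ)/3) + b) with hNdef
  have hN1 : (1:ℝ) ≤ N := by
    have : 0 ≤ a ^ ((1:ℝ)/3) := Real.rpow_nonneg ha _
    rw [hNdef]; linarith
  have hN0 : (0:ℝ) < N := lt_of_lt_of_le one_pos hN1
  have hMhalf : (0:ℝ) < M ^ ((1:ℝ)/2) := Real.rpow_pos_of_pos hM0 _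
  have hNle : N ≤ 3 * M ^ ((1:ℝ)/2) := by
    have h1 : (1:ℝ) ≤ M ^ ((1:ℝ)/2) := by
      calc (1:ℝ) = 1 ^ ((1:ℝ)/2) := (Real.one_rpow _).symm
        _ ≤ M ^ ((1:ℝ)/2) := Real.rpow_le_rpow zero_le_one hM1 (by norm_num)
    have h2 : a ^ ((1:ℝ)/3) ≤ M ^ ((1:ℝ)/2) := by
      have : a ^ ((1:ℝ)/3) = (a ^ ((2:ℝ)/3)) ^ ((1:ℝ)/2) := by
        rw [← Real.rpow_mul ha]; norm_num
      rw [this]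
      exact Real.rpow_le_rpow (Real.rpow_nonneg ha _)
        (le_trans (le_max_left _ _) (le_max_right _ _)) (by norm_num)
    have h3 : b ≤ M ^ ((1:ℝ)/2) := by
      have : b = (b ^ 2) ^ ((1:ℝ)/2) := by
        rw [← Real.rpow_natCast b 2, ← Real.rpow_mul hb]; norm_num
      rw [this]
      exact Real.rpow_le_rpow (sq_nonneg b)
        (le_trans (le_max_right _ _) (le_max_right _ _)) (by norm_num)
    rw [hNdef]; linarith
  have hanti : (3 * M ^ ((1:ℝ)/2)) ^ (-(2*γ)) ≤ N ^ (-(2*γ)) :=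
    Real.rpow_le_rpow_of_nonpos hN0 hNle (by linarith)
  have hsplit : (3 * M ^ ((1:ℝ)/2)) ^ (-(2*γ)) = (9:ℝ) ^ (-γ) * M ^ (-γ) := by
    rw [Real.mul_rpow (by norm_num) hMhalf.le, ← Real.rpow_mul hM0.le]
    congr 1
    · rw [show (-(2*γ)) = (2:ℝ) * (-γ) by ring, Real.rpow_mul (by norm_num : (0:ℝ) ≤ 3)]
      norm_num
    · ring
  have h9 : (9:ℝ) ^ γ * (9:ℝ) ^ (-γ) = 1 := by
    rw [← Real.rpow_add (by norm_num : (0:ℝ) < 9)]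
    norm_num
  calc (∫ r in Ioc s t, r ^ (γ - 1) * Real.exp (-lam * (r ^ 3 * a ^ 2 + r * b ^ 2)))
      ≤ S * M ^ (-γ) := main
    _ = (9:ℝ) ^ γ * S * ((9:ℝ) ^ (-γ) * M ^ (-γ)) := by
        rw [← mul_assoc, mul_comm ((9:ℝ)^γ) S, mul_assoc, mul_assoc, ← mul_assoc ((9:ℝ)^γ),
          h9, one_mul]
    _ = (9:ℝ) ^ γ * S * (3 * M ^ ((1:ℝ)/2)) ^ (-(2*γ)) := by rw [hsplit]
    _ ≤ (9:ℝ) ^ γ * S * N ^ (-(2*γ)) := by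
        apply mul_le_mul_of_nonneg_left hanti
        positivity

/-- Interpolation bound for the time integral of the kinetic Gaussian factor:
for `T, λ > 0`, `θ ∈ [0,1]`, `γ > 0` there is `C` such that for `0 ≤ s < t ≤ T`,
`∫_s^t r^{γ−1} e^{−λ(r³|ξ|² + r|η|²)} dr ≤ C |t−s|^{(γ∧1)(1−θ)} (1+|ζ|_a)^{−2θγ}`
with `|ζ|_a = |ξ|^{1/3} + |η|`. -/
theorem kinetic_time_integral_bound (d : ℕ) (T lam θ γ : ℝ) (hT : 0 < T)
    (hlam : 0 < lam) (hθ : θ ∈ Set.Icc (0 : ℝ) 1) (hγ : 0 < γ) :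
    ∃ C > 0, ∀ s t : ℝ, 0 ≤ s → s < t → t ≤ T →
      ∀ ξ η : EuclideanSpace ℝ (Fin d),
        (∫ r in Set.Ioc s t,
            r ^ (γ - 1) * Real.exp (-lam * (r ^ 3 * ‖ξ‖ ^ 2 + r * ‖η‖ ^ 2))) ≤
          C * |t - s| ^ (min γ 1 * (1 - θ)) *
            (1 + (‖ξ‖ ^ ((1 : ℝ) / 3) + ‖η‖)) ^ (-(2 * θ * γ)) := by
  obtain ⟨hθ0, hθ1⟩ := hθ
  obtain ⟨C₂, hC₂, hdecay⟩ := my_decay γ lam T hγ hlam hT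
  set C₁ : ℝ := T ^ (γ - 1) + 1/γ + 1 with hC₁def
  have hC₁ : 0 < C₁ := by
    have : (0:ℝ) < T ^ (γ - 1) := Real.rpow_pos_of_pos hT _
    positivity
  refine ⟨C₁ ^ (1 - θ) * C₂ ^ θ, by positivity, ?_⟩
  intro s t hs hst htT ξ η
  set I : ℝ := ∫ r in Ioc s t,
    r ^ (γ - 1) * Real.exp (-lam * (r ^ 3 * ‖ξ‖ ^ 2 + r * ‖η‖ ^ 2)) with hIdef
  have hI0 : 0 ≤ I := by
    rw [hIdef]
    apply setIntegral_nonneg measurableSet_Ioc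
    intro r hr
    exact (my_ptwise γ lam (‖ξ‖ ^ 2) (‖η‖ ^ 2) hlam (sq_nonneg _) (sq_nonneg _) hs hr).1
  have hts : (0:ℝ) < t - s := by linarith
  set N : ℝ := 1 + (‖ξ‖ ^ ((1:ℝ)/3) + ‖η‖) with hNdef
  have hN0 : (0:ℝ) < N := by
    have h1 : 0 ≤ ‖ξ‖ ^ ((1:ℝ)/3) := Real.rpow_nonneg (norm_nonneg _) _
    have h2 : (0:ℝ) ≤ ‖η‖ := norm_nonneg _
    rw [hNdef]; positivity
  have hA : I ≤ C₁ * (t - s) ^ (min γ 1) :=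
    le_trans (my_fbound γ lam (‖ξ‖ ^ 2) (‖η‖ ^ 2) hγ hlam (sq_nonneg _) (sq_nonneg _) hs hst.le)
      (my_timebound T γ hT hγ s t hs hst htT)
  have hB : I ≤ C₂ * N ^ (-(2 * γ)) :=
    hdecay s t hs hst htT ‖ξ‖ ‖η‖ (norm_nonneg _) (norm_nonneg _)
  have key : I ≤ (C₁ * (t - s) ^ (min γ 1)) ^ (1 - θ) * (C₂ * N ^ (-(2 * γ))) ^ θ :=
    my_interp hI0 hA hB hθ0 hθ1
  have hfin : (C₁ * (t - s) ^ (min γ 1)) ^ (1 - θ) * (C₂ * N ^ (-(2 * γ))) ^ θ =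
      C₁ ^ (1 - θ) * C₂ ^ θ * |t - s| ^ (min γ 1 * (1 - θ)) * N ^ (-(2 * θ * γ)) := by
    rw [abs_of_pos hts]
    rw [Real.mul_rpow hC₁.le (Real.rpow_nonneg hts.le _),
      Real.mul_rpow hC₂.le (Real.rpow_nonneg hN0.le _),
      ← Real.rpow_mul hts.le, ← Real.rpow_mul hN0.le,
      show -(2 * γ) * θ = -(2 * θ * γ) by ring]
    ring
  rw [hfin] at key
  exact key
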